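/- For every k > 1, every p > 1, and all r, s ∈ (0,1) with s ≤ r, one has (arcsin_p(s)/arcsin_p(r))^k ≤ arcsin_p(s^k)/arcsin_p(r^k), (artanh_p(s)/artanh_p(r))^k ≤ artanh_p(s^k)/artanh_p(r^k), and arsinh_p(s^k)/arsinh_p(r^k) ≤ (arsinh_p(s)/arsinh_p(r))^k. -/

import Mathlib

open Real

/-- The generalized inverse sine: `arcsin_p x = ∫₀ˣ (1 - tᵖ)^(-1/p) dt`. -/
noncomputable def arcsinp (p x : ℝ) : ℝ := ∫ t in (0:ℝ)..x, (1 - t ^ p) ^ (-1 / p)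

/-- The generalized inverse hyperbolic tangent: `artanh_p x = ∫₀ˣ (1 - tᵖ)⁻¹ dt`. -/
noncomputable def artanhp (p x : ℝ) : ℝ := ∫ t in (0:ℝ)..x, (1 - t ^ p)⁻¹

/-- The generalized inverse hyperbolic sine: `arsinh_p x = ∫₀ˣ (1 + tᵖ)^(-1/p) dt`. -/
noncomputable def arsinhp (p x : ℝ) : ℝ := ∫ t in (0:ℝ)..x, (1 + t ^ p) ^ (-1 / p)


section RatioAux
open MeasureTheory intervalIntegral Set

section general
variable {g ρ : ℝ → ℝ}

lemma myInt (hc : ∀ x ∈ Ico (0:ℝ) 1, ContinuousAt g x) {a b : ℝ}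
    (ha : 0 ≤ a) (hab : a ≤ b) (hb : b < 1) : IntervalIntegrable g volume a b := by
  apply ContinuousOn.intervalIntegrable
  intro t ht
  rw [uIcc_of_le hab] at ht
  exact (hc t ⟨le_trans ha ht.1, lt_of_le_of_lt ht.2 hb⟩).continuousWithinAt

lemma core_mono (hc : ∀ x ∈ Ico (0:ℝ) 1, ContinuousAt g x)
    (hρc : ∀ x ∈ Ico (0:ℝ) 1, ContinuousAt (fun t => ρ t * g t) x)
    (hpos : ∀ x ∈ Ico (0:ℝ) 1, 0 < g x)
    (hd : ∀ t ∈ Ico (0:ℝ) 1, HasDerivAt (fun u => u * g u) (ρ t * g t) t)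
    (hmono : MonotoneOn ρ (Ico 0 1))
    {y x : ℝ} (hy : 0 < y) (hyx : y ≤ x) (hx : x < 1) :
    y * g y * (∫ t in (0:ℝ)..x, g t) ≤ x * g x * (∫ t in (0:ℝ)..y, g t) := by
  have hy1 : y < 1 := lt_of_le_of_lt hyx hx
  have hymem : y ∈ Ico (0:ℝ) 1 := ⟨hy.le, hy1⟩
  have hxmem : x ∈ Ico (0:ℝ) 1 := ⟨(hy.trans_le hyx).le, hx⟩
  -- integrabilities
  have hI0y : IntervalIntegrable g volume 0 y := myInt hc le_rfl hy.le hy1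
  have hIyx : IntervalIntegrable g volume y x := myInt hc hy.le hyx hx
  have hIρ0y : IntervalIntegrable (fun t => ρ t * g t) volume 0 y := myInt hρc le_rfl hy.le hy1
  have hIρyx : IntervalIntegrable (fun t => ρ t * g t) volume y x := myInt hρc hy.le hyx hx
  -- FTC-2 identities
  have hid1 : (∫ t in (0:ℝ)..y, ρ t * g t) = y * g y := by
    have h := integral_eq_sub_of_hasDerivAt (f := fun u => u * g u) (f' := fun t => ρ t * g t)
      (a := 0) (b := y) ?_ hIρ0y
    · simpa using h
    · intro t ht
      rw [uIcc_of_le hy.le] at ht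
      exact hd t ⟨ht.1, lt_of_le_of_lt ht.2 hy1⟩
  have hid2 : (∫ t in y..x, ρ t * g t) = x * g x - y * g y := by
    apply integral_eq_sub_of_hasDerivAt
    · intro t ht
      rw [uIcc_of_le hyx] at ht
      exact hd t ⟨le_trans hy.le ht.1, lt_of_le_of_lt ht.2 hx⟩
    · exact hIρyx
  -- comparisons
  have hcmp1 : (∫ t in (0:ℝ)..y, ρ t * g t) ≤ ρ y * ∫ t in (0:ℝ)..y, g t := by
    rw [← intervalIntegral.integral_const_mul]
    apply intervalIntegral.integral_mono_on hy.le hIρ0y (hI0y.const_mul _)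
    intro t ht
    have htm : t ∈ Ico (0:ℝ) 1 := ⟨ht.1, lt_of_le_of_lt ht.2 hy1⟩
    exact mul_le_mul_of_nonneg_right (hmono htm hymem ht.2) (hpos t htm).le
  have hcmp2 : ρ y * (∫ t in y..x, g t) ≤ ∫ t in y..x, ρ t * g t := by
    rw [← intervalIntegral.integral_const_mul]
    apply intervalIntegral.integral_mono_on hyx (hIyx.const_mul _) hIρyx
    intro t ht
    have htm : t ∈ Ico (0:ℝ) 1 := ⟨le_trans hy.le ht.1, lt_of_le_of_lt ht.2 hx⟩
    exact mul_le_mul_of_nonneg_right (hmono hymem htm ht.1) (hpos t htm).le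
  have hsplit : (∫ t in (0:ℝ)..x, g t) = (∫ t in (0:ℝ)..y, g t) + ∫ t in y..x, g t :=
    (integral_add_adjacent_intervals hI0y hIyx).symm
  have hFy : 0 < ∫ t in (0:ℝ)..y, g t := by
    apply intervalIntegral.intervalIntegral_pos_of_pos_on hI0y _ hy
    intro t ht
    exact hpos t ⟨ht.1.le, lt_trans ht.2 hy1⟩
  have hB : 0 ≤ ∫ t in y..x, g t := by
    apply intervalIntegral.integral_nonneg hyx
    intro t ht
    exact (hpos t ⟨le_trans hy.le ht.1, lt_of_le_of_lt ht.2 hx⟩).le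
  have hgy : 0 < g y := hpos y hymem
  set A := (∫ t in (0:ℝ)..y, g t)
  set B := (∫ t in y..x, g t)
  have k1 : y * g y ≤ ρ y * A := hid1 ▸ hcmp1
  have k2 : ρ y * B ≤ x * g x - y * g y := hid2 ▸ hcmp2
  rw [hsplit]
  nlinarith [mul_le_mul_of_nonneg_right k1 hB, mul_le_mul_of_nonneg_right k2 hFy.le,
    mul_pos hy hgy]
end general

section general1b
variable {g ρ : ℝ → ℝ}

lemma main_mono (hc : ∀ x ∈ Ico (0:ℝ) 1, ContinuousAt g x)
    (hρc : ∀ x ∈ Ico (0:ℝ) 1, ContinuousAt (fun t => ρ t * g t) x)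
    (hpos : ∀ x ∈ Ico (0:ℝ) 1, 0 < g x)
    (hd : ∀ t ∈ Ico (0:ℝ) 1, HasDerivAt (fun u => u * g u) (ρ t * g t) t)
    (hmono : MonotoneOn ρ (Ico 0 1))
    {k r s : ℝ} (hk : 1 < k)
    (hr : r ∈ Ioo (0:ℝ) 1) (hs : s ∈ Ioo (0:ℝ) 1) (hsr : s ≤ r) :
    ((∫ t in (0:ℝ)..s, g t) / (∫ t in (0:ℝ)..r, g t)) ^ k
      ≤ (∫ t in (0:ℝ)..s ^ k, g t) / (∫ t in (0:ℝ)..r ^ k, g t) := by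
  set F : ℝ → ℝ := fun x => ∫ t in (0:ℝ)..x, g t with hF
  have hk0 : (0:ℝ) < k := lt_trans one_pos hk
  have hFpos : ∀ x ∈ Ioo (0:ℝ) 1, 0 < F x := by
    intro x hx
    apply intervalIntegral.intervalIntegral_pos_of_pos_on (myInt hc le_rfl hx.1.le hx.2) _ hx.1
    intro t ht
    exact hpos t ⟨ht.1.le, lt_trans ht.2 hx.2⟩
  have hFderiv : ∀ x ∈ Ioo (0:ℝ) 1, HasDerivAt F (g x) x := by
    intro x hx
    exact intervalIntegral.integral_hasDerivAt_right (myInt hc le_rfl hx.1.le hx.2)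
      (ContinuousAt.stronglyMeasurableAtFilter isOpen_Ioo
        (fun t ht => hc t ⟨ht.1.le, ht.2⟩) x hx)
      (hc x ⟨hx.1.le, hx.2⟩)
  have hmemk : ∀ x ∈ Ioo (0:ℝ) 1, x ^ k ∈ Ioo (0:ℝ) 1 := by
    intro x hx
    exact ⟨Real.rpow_pos_of_pos hx.1 k, Real.rpow_lt_one hx.1.le hx.2 hk0⟩
  set Ψ : ℝ → ℝ := fun x => Real.log (F (x ^ k)) - k * Real.log (F x) with hΨ
  have hΨd : ∀ x ∈ Ioo (0:ℝ) 1, HasDerivAt Ψ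
      (g (x ^ k) * (k * x ^ (k - 1)) / F (x ^ k) - k * (g x / F x)) x := by
    intro x hx
    have hxk := hmemk x hx
    have h1 : HasDerivAt (fun u => F (u ^ k)) (g (x ^ k) * (k * x ^ (k - 1))) x :=
      by have h0 := (hFderiv (x ^ k) hxk).comp x (Real.hasDerivAt_rpow_const (p := k) (Or.inl hx.1.ne')); exact h0
    have h2 := h1.log (hFpos _ hxk).ne'
    have h3 := ((hFderiv x hx).log (hFpos x hx).ne').const_mul k
    exact h2.sub h3
  have hΨle : ∀ x ∈ Ioo (0:ℝ) 1,
      g (x ^ k) * (k * x ^ (k - 1)) / F (x ^ k) - k * (g x / F x) ≤ 0 := by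
    intro x hx
    have hxk := hmemk x hx
    have hxky : x ^ k ≤ x := by
      nth_rewrite 2 [← Real.rpow_one x]
      exact Real.rpow_le_rpow_of_exponent_ge hx.1 hx.2.le hk.le
    have hcore := core_mono hc hρc hpos hd hmono hxk.1 hxky hx.2
    have hFx := hFpos x hx
    have hFxk := hFpos _ hxk
    have hsub : x ^ (k - 1) = x ^ k / x := by
      rw [Real.rpow_sub hx.1, Real.rpow_one]
    rw [hsub, sub_nonpos, div_le_iff₀ hFxk]
    have h2 := mul_le_mul_of_nonneg_left hcore (le_of_lt (div_pos hk0 hx.1))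
    have e1 : k / x * (x * g x * F (x ^ k)) = k * (g x / F x) * F (x ^ k) * F x := by
      field_simp [hx.1.ne']
    have e2 : k / x * (x ^ k * g (x ^ k) * F x) = g (x ^ k) * (k * (x ^ k / x)) * F x := by
      field_simp [hx.1.ne']
    rw [e1, e2] at h2
    have := mul_le_mul_of_nonneg_right h2 (le_of_lt (inv_pos.2 hFx))
    calc g (x ^ k) * (k * (x ^ k / x))
        = g (x ^ k) * (k * (x ^ k / x)) * F x * (F x)⁻¹ := by field_simp [hx.1.ne', hFx.ne']
      _ ≤ k * (g x / F x) * F (x ^ k) * F x * (F x)⁻¹ := this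
      _ = k * (g x / F x) * F (x ^ k) := by field_simp [hx.1.ne', hFx.ne']
  have hanti : AntitoneOn Ψ (Ioo (0:ℝ) 1) := by
    apply antitoneOn_of_deriv_nonpos (convex_Ioo 0 1)
    · intro x hx
      exact (hΨd x hx).continuousAt.continuousWithinAt
    · rw [interior_Ioo]
      intro x hx
      exact (hΨd x hx).differentiableAt.differentiableWithinAt
    · rw [interior_Ioo]
      intro x hx
      rw [(hΨd x hx).deriv]
      exact hΨle x hx
  have hkey := hanti hs hr hsr
  have hFs := hFpos s hs
  have hFr := hFpos r hr
  have hFsk := hFpos _ (hmemk s hs)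
  have hFrk := hFpos _ (hmemk r hr)
  rw [← Real.log_le_log_iff (by positivity) (by positivity),
    Real.log_rpow (by positivity), Real.log_div hFs.ne' hFr.ne',
    Real.log_div hFsk.ne' hFrk.ne']
  simp only [hΨ] at hkey
  nlinarith [hkey]
end general1b

section general2
variable {g ρ : ℝ → ℝ}

lemma myInt' (hc : ∀ x ∈ Ico (0:ℝ) 1, ContinuousAt g x) {a b : ℝ}
    (ha : 0 ≤ a) (hab : a ≤ b) (hb : b < 1) : IntervalIntegrable g volume a b := by
  apply ContinuousOn.intervalIntegrable
  intro t ht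
  rw [uIcc_of_le hab] at ht
  exact (hc t ⟨le_trans ha ht.1, lt_of_le_of_lt ht.2 hb⟩).continuousWithinAt

lemma core_anti (hc : ∀ x ∈ Ico (0:ℝ) 1, ContinuousAt g x)
    (hρc : ∀ x ∈ Ico (0:ℝ) 1, ContinuousAt (fun t => ρ t * g t) x)
    (hpos : ∀ x ∈ Ico (0:ℝ) 1, 0 < g x)
    (hd : ∀ t ∈ Ico (0:ℝ) 1, HasDerivAt (fun u => u * g u) (ρ t * g t) t)
    (hanti : AntitoneOn ρ (Ico 0 1))
    {y x : ℝ} (hy : 0 < y) (hyx : y ≤ x) (hx : x < 1) :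
    x * g x * (∫ t in (0:ℝ)..y, g t) ≤ y * g y * (∫ t in (0:ℝ)..x, g t) := by
  have hy1 : y < 1 := lt_of_le_of_lt hyx hx
  have hymem : y ∈ Ico (0:ℝ) 1 := ⟨hy.le, hy1⟩
  have hxmem : x ∈ Ico (0:ℝ) 1 := ⟨(hy.trans_le hyx).le, hx⟩
  have hI0y : IntervalIntegrable g volume 0 y := myInt' hc le_rfl hy.le hy1
  have hIyx : IntervalIntegrable g volume y x := myInt' hc hy.le hyx hx
  have hIρ0y : IntervalIntegrable (fun t => ρ t * g t) volume 0 y := myInt' hρc le_rfl hy.le hy1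
  have hIρyx : IntervalIntegrable (fun t => ρ t * g t) volume y x := myInt' hρc hy.le hyx hx
  have hid1 : (∫ t in (0:ℝ)..y, ρ t * g t) = y * g y := by
    have h := integral_eq_sub_of_hasDerivAt (f := fun u => u * g u) (f' := fun t => ρ t * g t)
      (a := 0) (b := y) ?_ hIρ0y
    · simpa using h
    · intro t ht
      rw [uIcc_of_le hy.le] at ht
      exact hd t ⟨ht.1, lt_of_le_of_lt ht.2 hy1⟩
  have hid2 : (∫ t in y..x, ρ t * g t) = x * g x - y * g y := by
    apply integral_eq_sub_of_hasDerivAt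
    · intro t ht
      rw [uIcc_of_le hyx] at ht
      exact hd t ⟨le_trans hy.le ht.1, lt_of_le_of_lt ht.2 hx⟩
    · exact hIρyx
  have hcmp1 : ρ y * (∫ t in (0:ℝ)..y, g t) ≤ ∫ t in (0:ℝ)..y, ρ t * g t := by
    rw [← intervalIntegral.integral_const_mul]
    apply intervalIntegral.integral_mono_on hy.le (hI0y.const_mul _) hIρ0y
    intro t ht
    have htm : t ∈ Ico (0:ℝ) 1 := ⟨ht.1, lt_of_le_of_lt ht.2 hy1⟩
    exact mul_le_mul_of_nonneg_right (hanti htm hymem ht.2) (hpos t htm).le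
  have hcmp2 : (∫ t in y..x, ρ t * g t) ≤ ρ y * ∫ t in y..x, g t := by
    rw [← intervalIntegral.integral_const_mul]
    apply intervalIntegral.integral_mono_on hyx hIρyx (hIyx.const_mul _)
    intro t ht
    have htm : t ∈ Ico (0:ℝ) 1 := ⟨le_trans hy.le ht.1, lt_of_le_of_lt ht.2 hx⟩
    exact mul_le_mul_of_nonneg_right (hanti hymem htm ht.1) (hpos t htm).le
  have hsplit : (∫ t in (0:ℝ)..x, g t) = (∫ t in (0:ℝ)..y, g t) + ∫ t in y..x, g t :=
    (integral_add_adjacent_intervals hI0y hIyx).symm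
  have hFy : 0 < ∫ t in (0:ℝ)..y, g t := by
    apply intervalIntegral.intervalIntegral_pos_of_pos_on hI0y _ hy
    intro t ht
    exact hpos t ⟨ht.1.le, lt_trans ht.2 hy1⟩
  have hB : 0 ≤ ∫ t in y..x, g t := by
    apply intervalIntegral.integral_nonneg hyx
    intro t ht
    exact (hpos t ⟨le_trans hy.le ht.1, lt_of_le_of_lt ht.2 hx⟩).le
  have hgy : 0 < g y := hpos y hymem
  set A := (∫ t in (0:ℝ)..y, g t)
  set B := (∫ t in y..x, g t)
  have k1 : ρ y * A ≤ y * g y := hid1 ▸ hcmp1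
  have k2 : x * g x - y * g y ≤ ρ y * B := hid2 ▸ hcmp2
  rw [hsplit]
  nlinarith [mul_le_mul_of_nonneg_right k1 hB, mul_le_mul_of_nonneg_right k2 hFy.le,
    mul_pos hy hgy]

lemma main_anti (hc : ∀ x ∈ Ico (0:ℝ) 1, ContinuousAt g x)
    (hρc : ∀ x ∈ Ico (0:ℝ) 1, ContinuousAt (fun t => ρ t * g t) x)
    (hpos : ∀ x ∈ Ico (0:ℝ) 1, 0 < g x)
    (hd : ∀ t ∈ Ico (0:ℝ) 1, HasDerivAt (fun u => u * g u) (ρ t * g t) t)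
    (hanti : AntitoneOn ρ (Ico 0 1))
    {k r s : ℝ} (hk : 1 < k)
    (hr : r ∈ Ioo (0:ℝ) 1) (hs : s ∈ Ioo (0:ℝ) 1) (hsr : s ≤ r) :
    (∫ t in (0:ℝ)..s ^ k, g t) / (∫ t in (0:ℝ)..r ^ k, g t)
      ≤ ((∫ t in (0:ℝ)..s, g t) / (∫ t in (0:ℝ)..r, g t)) ^ k := by
  set F : ℝ → ℝ := fun x => ∫ t in (0:ℝ)..x, g t with hF
  have hk0 : (0:ℝ) < k := lt_trans one_pos hk
  have hFpos : ∀ x ∈ Ioo (0:ℝ) 1, 0 < F x := by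
    intro x hx
    apply intervalIntegral.intervalIntegral_pos_of_pos_on (myInt' hc le_rfl hx.1.le hx.2) _ hx.1
    intro t ht
    exact hpos t ⟨ht.1.le, lt_trans ht.2 hx.2⟩
  have hFderiv : ∀ x ∈ Ioo (0:ℝ) 1, HasDerivAt F (g x) x := by
    intro x hx
    exact intervalIntegral.integral_hasDerivAt_right (myInt' hc le_rfl hx.1.le hx.2)
      (ContinuousAt.stronglyMeasurableAtFilter isOpen_Ioo
        (fun t ht => hc t ⟨ht.1.le, ht.2⟩) x hx)
      (hc x ⟨hx.1.le, hx.2⟩)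
  have hmemk : ∀ x ∈ Ioo (0:ℝ) 1, x ^ k ∈ Ioo (0:ℝ) 1 := by
    intro x hx
    exact ⟨Real.rpow_pos_of_pos hx.1 k, Real.rpow_lt_one hx.1.le hx.2 hk0⟩
  set Ψ : ℝ → ℝ := fun x => Real.log (F (x ^ k)) - k * Real.log (F x) with hΨ
  have hΨd : ∀ x ∈ Ioo (0:ℝ) 1, HasDerivAt Ψ
      (g (x ^ k) * (k * x ^ (k - 1)) / F (x ^ k) - k * (g x / F x)) x := by
    intro x hx
    have hxk := hmemk x hx
    have h1 : HasDerivAt (fun u => F (u ^ k)) (g (x ^ k) * (k * x ^ (k - 1))) x :=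
      by have h0 := (hFderiv (x ^ k) hxk).comp x (Real.hasDerivAt_rpow_const (p := k) (Or.inl hx.1.ne')); exact h0
    have h2 := h1.log (hFpos _ hxk).ne'
    have h3 := ((hFderiv x hx).log (hFpos x hx).ne').const_mul k
    exact h2.sub h3
  have hΨge : ∀ x ∈ Ioo (0:ℝ) 1,
      0 ≤ g (x ^ k) * (k * x ^ (k - 1)) / F (x ^ k) - k * (g x / F x) := by
    intro x hx
    have hxk := hmemk x hx
    have hxky : x ^ k ≤ x := by
      nth_rewrite 2 [← Real.rpow_one x]
      exact Real.rpow_le_rpow_of_exponent_ge hx.1 hx.2.le hk.le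
    have hcore := core_anti hc hρc hpos hd hanti hxk.1 hxky hx.2
    have hFx := hFpos x hx
    have hFxk := hFpos _ hxk
    have hsub : x ^ (k - 1) = x ^ k / x := by
      rw [Real.rpow_sub hx.1, Real.rpow_one]
    rw [hsub, sub_nonneg, le_div_iff₀ hFxk]
    have h2 := mul_le_mul_of_nonneg_left hcore (le_of_lt (div_pos hk0 hx.1))
    have e1 : k / x * (x * g x * F (x ^ k)) = k * (g x / F x) * F (x ^ k) * F x := by
      field_simp [hx.1.ne']
    have e2 : k / x * (x ^ k * g (x ^ k) * F x) = g (x ^ k) * (k * (x ^ k / x)) * F x := by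
      field_simp [hx.1.ne']
    rw [e1, e2] at h2
    have := mul_le_mul_of_nonneg_right h2 (le_of_lt (inv_pos.2 hFx))
    calc k * (g x / F x) * F (x ^ k)
        = k * (g x / F x) * F (x ^ k) * F x * (F x)⁻¹ := by
          field_simp [hx.1.ne', hFx.ne']
      _ ≤ g (x ^ k) * (k * (x ^ k / x)) * F x * (F x)⁻¹ := this
      _ = g (x ^ k) * (k * (x ^ k / x)) := by field_simp [hx.1.ne', hFx.ne']
  have hmono' : MonotoneOn Ψ (Ioo (0:ℝ) 1) := by
    apply monotoneOn_of_deriv_nonneg (convex_Ioo 0 1)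
    · intro x hx
      exact (hΨd x hx).continuousAt.continuousWithinAt
    · rw [interior_Ioo]
      intro x hx
      exact (hΨd x hx).differentiableAt.differentiableWithinAt
    · rw [interior_Ioo]
      intro x hx
      rw [(hΨd x hx).deriv]
      exact hΨge x hx
  have hkey := hmono' hs hr hsr
  have hFs := hFpos s hs
  have hFr := hFpos r hr
  have hFsk := hFpos _ (hmemk s hs)
  have hFrk := hFpos _ (hmemk r hr)
  rw [← Real.log_le_log_iff (by positivity) (by positivity),
    Real.log_rpow (by positivity), Real.log_div hFs.ne' hFr.ne',
    Real.log_div hFsk.ne' hFrk.ne']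
  simp only [hΨ] at hkey
  nlinarith [hkey]
end general2

section inst
variable {p : ℝ} (hp : 1 < p)

lemma ratioAux_hp0 (hp : 1 < p) : (0:ℝ) < p := lt_trans one_pos hp

lemma ratioAux_hw_sub (hp : 1 < p) : ∀ t ∈ Ico (0:ℝ) 1, 0 < 1 - t ^ p := by
  intro t ht
  have := Real.rpow_lt_one ht.1 ht.2 (ratioAux_hp0 hp)
  linarith

lemma ratioAux_htp_id (hp : 1 < p) {t : ℝ} (ht : 0 ≤ t) : t * t ^ (p - 1) = t ^ p := by
  rcases eq_or_lt_of_le ht with h | h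
  · rw [← h, Real.zero_rpow (by positivity : p ≠ 0), zero_mul]
  · have e := Real.rpow_add h 1 (p - 1)
    rw [Real.rpow_one] at e
    rw [← e]
    congr 1
    ring

lemma ratioAux_arcsin_cont (hp : 1 < p) :
    ∀ x ∈ Ico (0:ℝ) 1, ContinuousAt (fun t => (1 - t ^ p) ^ (-1 / p)) x := by
  intro x hx
  have h1 : ContinuousAt (fun t : ℝ => 1 - t ^ p) x :=
    continuousAt_const.sub (Real.continuousAt_rpow_const x p (Or.inr (ratioAux_hp0 hp).le))
  exact h1.rpow_const (Or.inl (ratioAux_hw_sub hp x hx).ne')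

lemma ratioAux_arcsin_rhoc (hp : 1 < p) :
    ∀ x ∈ Ico (0:ℝ) 1, ContinuousAt (fun t => (1 - t ^ p)⁻¹ * (1 - t ^ p) ^ (-1 / p)) x := by
  intro x hx
  have h1 : ContinuousAt (fun t : ℝ => 1 - t ^ p) x :=
    continuousAt_const.sub (Real.continuousAt_rpow_const x p (Or.inr (ratioAux_hp0 hp).le))
  exact (h1.inv₀ (ratioAux_hw_sub hp x hx).ne').mul (h1.rpow_const (Or.inl (ratioAux_hw_sub hp x hx).ne'))

lemma ratioAux_arcsin_pos (hp : 1 < p) :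
    ∀ x ∈ Ico (0:ℝ) 1, 0 < (1 - x ^ p) ^ (-1 / p) :=
  fun x hx => Real.rpow_pos_of_pos (ratioAux_hw_sub hp x hx) _

lemma ratioAux_arcsin_deriv (hp : 1 < p) :
    ∀ t ∈ Ico (0:ℝ) 1, HasDerivAt (fun u => u * (1 - u ^ p) ^ (-1 / p))
      ((1 - t ^ p)⁻¹ * (1 - t ^ p) ^ (-1 / p)) t := by
  intro t ht
  have hwt := ratioAux_hw_sub hp t ht
  have h1 : HasDerivAt (fun u : ℝ => u ^ p) (p * t ^ (p - 1)) t :=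
    Real.hasDerivAt_rpow_const (Or.inr hp.le)
  have h2 : HasDerivAt (fun u : ℝ => 1 - u ^ p) (-(p * t ^ (p - 1))) t := h1.const_sub 1
  have h3 : HasDerivAt (fun w : ℝ => w ^ (-1 / p)) (-1 / p * (1 - t ^ p) ^ (-1 / p - 1))
      (1 - t ^ p) := Real.hasDerivAt_rpow_const (Or.inl hwt.ne')
  have h4 := h3.comp t h2
  have h5 : HasDerivAt (fun u => u * (1 - u ^ p) ^ (-1 / p)) _ t := (hasDerivAt_id t).fun_mul h4
  convert h5 using 1
  have htp := ratioAux_htp_id hp ht.1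
  have e1 : (1 - t ^ p) ^ (-1 / p) = (1 - t ^ p) ^ (-1 / p - 1) * (1 - t ^ p) := by
    rw [← Real.rpow_add_one hwt.ne' (-1 / p - 1)]
    congr 1
    ring
  have hpne : p ≠ 0 := by positivity
  have e3 : t * (-1 / p * (1 - t ^ p) ^ (-1 / p - 1) * -(p * t ^ (p - 1)))
      = t ^ p * (1 - t ^ p) ^ (-1 / p - 1) := by
    rw [← htp]
    field_simp
  simp only [id_eq, Function.comp_apply, one_mul]
  rw [e1, e3]
  have e4 : (1 - t ^ p)⁻¹ * ((1 - t ^ p) ^ (-1 / p - 1) * (1 - t ^ p))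
      = (1 - t ^ p) ^ (-1 / p - 1) := by
    field_simp
  rw [e4]
  ring
end inst

section inst2
variable {p : ℝ}

lemma ratioAux_hw_subX (hp : 1 < p) : ∀ t ∈ Ico (0:ℝ) 1, 0 < 1 - t ^ p := by
  intro t ht
  have := Real.rpow_lt_one ht.1 ht.2 (by linarith : (0:ℝ) < p)
  linarith

lemma ratioAux_arcsin_mono (hp : 1 < p) : MonotoneOn (fun t : ℝ => (1 - t ^ p)⁻¹) (Ico 0 1) := by
  intro a ha b hb hab
  have h1 : a ^ p ≤ b ^ p := Real.rpow_le_rpow ha.1 hab (by linarith)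
  have h2 := ratioAux_hw_subX hp b hb
  have h3 := ratioAux_hw_subX hp a ha
  exact inv_anti₀ h2 (by linarith)

lemma ratioAux_artanh_mono (hp : 1 < p) :
    MonotoneOn (fun t : ℝ => (1 + (p - 1) * t ^ p) * (1 - t ^ p)⁻¹) (Ico 0 1) := by
  intro a ha b hb hab
  have h1 : a ^ p ≤ b ^ p := Real.rpow_le_rpow ha.1 hab (by linarith)
  have h2 := ratioAux_hw_subX hp b hb
  have h3 := ratioAux_hw_subX hp a ha
  have h4 : (0:ℝ) ≤ a ^ p := Real.rpow_nonneg ha.1 p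
  have h5 : (0:ℝ) ≤ b ^ p := Real.rpow_nonneg hb.1 p
  apply mul_le_mul
  · nlinarith
  · exact inv_anti₀ h2 (by linarith)
  · positivity
  · nlinarith
lemma ratioAux_arsinh_anti (hp : 1 < p) : AntitoneOn (fun t : ℝ => (1 + t ^ p)⁻¹) (Ico 0 1) := by
  intro a ha b hb hab
  have h1 : a ^ p ≤ b ^ p := Real.rpow_le_rpow ha.1 hab (by linarith)
  have h4 : (0:ℝ) ≤ a ^ p := Real.rpow_nonneg ha.1 p
  exact inv_anti₀ (by linarith) (by linarith)

-- artanh pieces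
lemma ratioAux_artanh_cont (hp : 1 < p) :
    ∀ x ∈ Ico (0:ℝ) 1, ContinuousAt (fun t => (1 - t ^ p)⁻¹) x := by
  intro x hx
  have h1 : ContinuousAt (fun t : ℝ => 1 - t ^ p) x :=
    continuousAt_const.sub (Real.continuousAt_rpow_const x p (Or.inr (by linarith)))
  exact h1.inv₀ (ratioAux_hw_subX hp x hx).ne'

lemma ratioAux_artanh_rhoc (hp : 1 < p) :
    ∀ x ∈ Ico (0:ℝ) 1, ContinuousAt
      (fun t => (1 + (p - 1) * t ^ p) * (1 - t ^ p)⁻¹ * (1 - t ^ p)⁻¹) x := by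
  intro x hx
  have h0 : ContinuousAt (fun t : ℝ => t ^ p) x :=
    Real.continuousAt_rpow_const x p (Or.inr (by linarith))
  have h1 : ContinuousAt (fun t : ℝ => 1 - t ^ p) x := continuousAt_const.sub h0
  have h2 := h1.inv₀ (ratioAux_hw_subX hp x hx).ne'
  exact ((continuousAt_const.add (continuousAt_const.mul h0)).mul h2).mul h2

lemma ratioAux_artanh_pos (hp : 1 < p) : ∀ x ∈ Ico (0:ℝ) 1, 0 < (1 - x ^ p)⁻¹ :=
  fun x hx => inv_pos.2 (ratioAux_hw_subX hp x hx)

lemma ratioAux_artanh_deriv (hp : 1 < p) :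
    ∀ t ∈ Ico (0:ℝ) 1, HasDerivAt (fun u => u * (1 - u ^ p)⁻¹)
      ((1 + (p - 1) * t ^ p) * (1 - t ^ p)⁻¹ * (1 - t ^ p)⁻¹) t := by
  intro t ht
  have hwt := ratioAux_hw_subX hp t ht
  have htp : t * t ^ (p - 1) = t ^ p := by
    rcases eq_or_lt_of_le ht.1 with h | h
    · rw [← h, Real.zero_rpow (by positivity : p ≠ 0), zero_mul]
    · have e := Real.rpow_add h 1 (p - 1)
      rw [Real.rpow_one] at e
      rw [← e]; congr 1; ring
  have h1 : HasDerivAt (fun u : ℝ => u ^ p) (p * t ^ (p - 1)) t :=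
    Real.hasDerivAt_rpow_const (Or.inr hp.le)
  have h2 : HasDerivAt (fun u : ℝ => 1 - u ^ p) (-(p * t ^ (p - 1))) t := h1.const_sub 1
  have h3 := h2.fun_inv hwt.ne'
  have h5 : HasDerivAt (fun u => u * (1 - u ^ p)⁻¹) _ t := (hasDerivAt_id t).fun_mul h3
  convert h5 using 1
  simp only [id_eq, one_mul]
  rw [neg_neg]
  field_simp
  linear_combination (-p) * htp

-- arsinh pieces
lemma ratioAux_hw_add (hp : 1 < p) : ∀ t ∈ Ico (0:ℝ) 1, 0 < 1 + t ^ p := by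
  intro t ht
  have := Real.rpow_nonneg ht.1 p
  linarith

lemma ratioAux_arsinh_cont (hp : 1 < p) :
    ∀ x ∈ Ico (0:ℝ) 1, ContinuousAt (fun t => (1 + t ^ p) ^ (-1 / p)) x := by
  intro x hx
  have h1 : ContinuousAt (fun t : ℝ => 1 + t ^ p) x :=
    continuousAt_const.add (Real.continuousAt_rpow_const x p (Or.inr (by linarith)))
  exact h1.rpow_const (Or.inl (ratioAux_hw_add hp x hx).ne')

lemma ratioAux_arsinh_rhoc (hp : 1 < p) :
    ∀ x ∈ Ico (0:ℝ) 1, ContinuousAt (fun t => (1 + t ^ p)⁻¹ * (1 + t ^ p) ^ (-1 / p)) x := by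
  intro x hx
  have h1 : ContinuousAt (fun t : ℝ => 1 + t ^ p) x :=
    continuousAt_const.add (Real.continuousAt_rpow_const x p (Or.inr (by linarith)))
  exact (h1.inv₀ (ratioAux_hw_add hp x hx).ne').mul (h1.rpow_const (Or.inl (ratioAux_hw_add hp x hx).ne'))

lemma ratioAux_arsinh_pos (hp : 1 < p) :
    ∀ x ∈ Ico (0:ℝ) 1, 0 < (1 + x ^ p) ^ (-1 / p) :=
  fun x hx => Real.rpow_pos_of_pos (ratioAux_hw_add hp x hx) _

lemma ratioAux_arsinh_deriv (hp : 1 < p) :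
    ∀ t ∈ Ico (0:ℝ) 1, HasDerivAt (fun u => u * (1 + u ^ p) ^ (-1 / p))
      ((1 + t ^ p)⁻¹ * (1 + t ^ p) ^ (-1 / p)) t := by
  intro t ht
  have hwt := ratioAux_hw_add hp t ht
  have htp : t * t ^ (p - 1) = t ^ p := by
    rcases eq_or_lt_of_le ht.1 with h | h
    · rw [← h, Real.zero_rpow (by positivity : p ≠ 0), zero_mul]
    · have e := Real.rpow_add h 1 (p - 1)
      rw [Real.rpow_one] at e
      rw [← e]; congr 1; ring
  have h1 : HasDerivAt (fun u : ℝ => u ^ p) (p * t ^ (p - 1)) t :=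
    Real.hasDerivAt_rpow_const (Or.inr hp.le)
  have h2 : HasDerivAt (fun u : ℝ => 1 + u ^ p) (p * t ^ (p - 1)) t := by
    simpa using (h1.const_add 1)
  have h3 : HasDerivAt (fun w : ℝ => w ^ (-1 / p)) (-1 / p * (1 + t ^ p) ^ (-1 / p - 1))
      (1 + t ^ p) := Real.hasDerivAt_rpow_const (Or.inl hwt.ne')
  have h4 := h3.comp t h2
  have h5 : HasDerivAt (fun u => u * (1 + u ^ p) ^ (-1 / p)) _ t := (hasDerivAt_id t).fun_mul h4
  convert h5 using 1
  have hpne : p ≠ 0 := by positivity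
  have e1 : (1 + t ^ p) ^ (-1 / p) = (1 + t ^ p) ^ (-1 / p - 1) * (1 + t ^ p) := by
    rw [← Real.rpow_add_one hwt.ne' (-1 / p - 1)]
    congr 1; ring
  have e3 : t * (-1 / p * (1 + t ^ p) ^ (-1 / p - 1) * (p * t ^ (p - 1)))
      = -(t ^ p * (1 + t ^ p) ^ (-1 / p - 1)) := by
    rw [← htp]
    field_simp
  simp only [id_eq, Function.comp_apply, one_mul]
  rw [e1, e3]
  have e4 : (1 + t ^ p)⁻¹ * ((1 + t ^ p) ^ (-1 / p - 1) * (1 + t ^ p))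
      = (1 + t ^ p) ^ (-1 / p - 1) := by
    field_simp
  rw [e4]
  ring
end inst2

end RatioAux

theorem ratio_inequalities (k p r s : ℝ) (hk : 1 < k) (hp : 1 < p)
    (hr : r ∈ Set.Ioo (0:ℝ) 1) (hs : s ∈ Set.Ioo (0:ℝ) 1) (hsr : s ≤ r) :
    (arcsinp p s / arcsinp p r) ^ k ≤ arcsinp p (s ^ k) / arcsinp p (r ^ k) ∧
      (artanhp p s / artanhp p r) ^ k ≤ artanhp p (s ^ k) / artanhp p (r ^ k) ∧
      arsinhp p (s ^ k) / arsinhp p (r ^ k) ≤ (arsinhp p s / arsinhp p r) ^ k := by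
  refine ⟨?_, ?_, ?_⟩
  · simp only [arcsinp]
    exact main_mono (ratioAux_arcsin_cont hp) (ratioAux_arcsin_rhoc hp) (ratioAux_arcsin_pos hp)
      (ratioAux_arcsin_deriv hp) (ratioAux_arcsin_mono hp) hk hr hs hsr
  · simp only [artanhp]
    exact main_mono (ratioAux_artanh_cont hp) (ratioAux_artanh_rhoc hp) (ratioAux_artanh_pos hp)
      (ratioAux_artanh_deriv hp) (ratioAux_artanh_mono hp) hk hr hs hsr
  · simp only [arsinhp]
    exact main_anti (ratioAux_arsinh_cont hp) (ratioAux_arsinh_rhoc hp) (ratioAux_arsinh_pos hp)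
      (ratioAux_arsinh_deriv hp) (ratioAux_arsinh_anti hp) hk hr hs hsr
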